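/- The function f(ζ) = ρ(ζ) defined for ζ ∈ [0,1] by ρ(ζ) = τ p_t p_d · r^H Γ(ζ)^{-1} r, where Γ(ζ) = (ζ(1−ζ) c_1) Γ_w + (ζ c_2) Λ_w + ((1−ζ) c_3) Ψ + Γ_0 with Γ_w, Λ_w, Ψ positive semidefinite Hermitian, Γ_0 positive definite Hermitian, and c_1, c_2, c_3 > 0, satisfies f''(ζ) = τ p_t p_d · r^H Γ^{-1}(2 Γ' Γ^{-1} Γ' − Γ'') Γ^{-1} r where Γ'' = −2c_1 Γ_w; consequently, if Γ_w is positive definite then f''(ζ) > 0 for all ζ ∈ [0,1] and all r ≠ 0, so f is strictly convex. -/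

import Mathlib

open Matrix
open scoped ComplexOrder

attribute [local instance] Matrix.linftyOpNormedRing Matrix.linftyOpNormedAlgebra

section Aux

variable {n : Type*} [Fintype n] [DecidableEq n]

theorem aux_hasDerivAt_matrix_inv {g : ℝ → Matrix n n ℂ} {g' : Matrix n n ℂ} {x : ℝ}
    (hg : HasDerivAt g g' x) (hu : IsUnit (g x)) :
    HasDerivAt (fun t => (g t)⁻¹) (-((g x)⁻¹ * g' * (g x)⁻¹)) x := by
  have h1 : HasDerivAt (fun t => Ring.inverse (g t))
      (-(((↑hu.unit⁻¹ : Matrix n n ℂ)) * g' * (↑hu.unit⁻¹ : Matrix n n ℂ))) x := by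
    have := (hasFDerivAt_ringInverse (𝕜 := ℝ) hu.unit).comp_hasDerivAt x hg
    simp at this
    refine this.congr_deriv ?_
    simp
  have h2 : (↑hu.unit⁻¹ : Matrix n n ℂ) = (g x)⁻¹ := by
    rw [Matrix.nonsing_inv_eq_ringInverse, ← Ring.inverse_unit hu.unit]
    rfl
  rw [h2] at h1
  simpa only [Matrix.nonsing_inv_eq_ringInverse] using h1

theorem aux_smul_posSemidef {a : ℝ} (ha : 0 ≤ a) {M : Matrix n n ℂ} (hM : M.PosSemidef) :
    (((a : ℝ) : ℂ) • M).PosSemidef := by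
  refine Matrix.PosSemidef.of_dotProduct_mulVec_nonneg ?_ (fun x => ?_)
  · unfold Matrix.IsHermitian
    rw [Matrix.conjTranspose_smul, hM.1.eq]
    congr 1
    simp [Complex.star_def, Complex.conj_ofReal]
  · rw [Matrix.smul_mulVec, dotProduct_smul, smul_eq_mul]
    have ha' : (0 : ℂ) ≤ (a : ℂ) := by exact_mod_cast ha
    exact mul_nonneg ha' (hM.dotProduct_mulVec_nonneg x)

theorem aux_smul_posDef {a : ℝ} (ha : 0 < a) {M : Matrix n n ℂ} (hM : M.PosDef) :
    (((a : ℝ) : ℂ) • M).PosDef := by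
  refine Matrix.PosDef.of_dotProduct_mulVec_pos ?_ (fun x hx => ?_)
  · unfold Matrix.IsHermitian
    rw [Matrix.conjTranspose_smul, hM.1.eq]
    congr 1
    simp [Complex.star_def, Complex.conj_ofReal]
  · rw [Matrix.smul_mulVec, dotProduct_smul, smul_eq_mul]
    have ha' : (0 : ℂ) < (a : ℂ) := by exact_mod_cast ha
    exact mul_pos ha' (hM.dotProduct_mulVec_pos hx)

theorem aux_posDef_conj {M B : Matrix n n ℂ} (hM : M.PosDef) (hB : IsUnit B) :
    (Bᴴ * M * B).PosDef := by
  refine Matrix.PosDef.of_dotProduct_mulVec_pos (Matrix.isHermitian_conjTranspose_mul_mul B hM.1) (fun x hx => ?_)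
  have hBx : B *ᵥ x ≠ 0 := by
    intro h
    exact hx <| (Matrix.mulVec_injective_iff_isUnit.mpr hB) (by simpa using h)
  have key := hM.dotProduct_mulVec_pos hBx
  have : star x ⬝ᵥ ((Bᴴ * M * B) *ᵥ x) = star (B *ᵥ x) ⬝ᵥ (M *ᵥ (B *ᵥ x)) := by
    rw [star_mulVec, ← Matrix.mulVec_mulVec, ← Matrix.mulVec_mulVec,
      Matrix.dotProduct_mulVec (star x) Bᴴ]
  rw [this]
  exact key

/-- The quadratic-form functional `M ↦ rᴴ M r` as a `ℂ`-linear map. -/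
noncomputable def auxQF (r : n → ℂ) : Matrix n n ℂ →ₗ[ℂ] ℂ where
  toFun M := star r ⬝ᵥ (M *ᵥ r)
  map_add' M N := by simp [Matrix.add_mulVec, dotProduct_add]
  map_smul' c M := by simp [Matrix.smul_mulVec]

end Aux

/-- Theorem 3 (convexity of the jammer's power allocation problem): for
`Γ(ζ) = ζ(1−ζ)c₁ Γ_w + ζc₂ Λ_w + (1−ζ)c₃ Ψ + Γ₀` with `Γ_w, Λ_w, Ψ` positive
semidefinite Hermitian, `Γ₀` positive definite Hermitian and `c₁, c₂, c₃ > 0`, the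
function `f(ζ) = τ p_t p_d · rᴴ Γ(ζ)⁻¹ r` satisfies
`f''(ζ) = τ p_t p_d · rᴴ Γ⁻¹ (2 Γ' Γ⁻¹ Γ' − Γ'') Γ⁻¹ r` with `Γ'' = −2c₁ Γ_w`;
consequently, if `Γ_w` is positive definite then `f''(ζ) > 0` on `[0,1]` for all
`r ≠ 0`, so `f` is strictly convex. -/
theorem jammer_objective_second_derivative_and_convexity
    {n : Type*} [Fintype n] [DecidableEq n]
    (Γw Λw Ψ Γ0 : Matrix n n ℂ)
    (hΓw : Γw.PosSemidef) (hΛw : Λw.PosSemidef) (hΨ : Ψ.PosSemidef) (hΓ0 : Γ0.PosDef)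
    (c1 c2 c3 : ℝ) (hc1 : 0 < c1) (hc2 : 0 < c2) (hc3 : 0 < c3)
    (τ pt pd : ℝ) (hτ : 0 < τ) (hpt : 0 < pt) (hpd : 0 < pd)
    (r : n → ℂ)
    (G G' : ℝ → Matrix n n ℂ) (G'' : Matrix n n ℂ)
    (hG : G = fun ζ => ((ζ * (1 - ζ) * c1 : ℝ) : ℂ) • Γw + ((ζ * c2 : ℝ) : ℂ) • Λw
        + (((1 - ζ) * c3 : ℝ) : ℂ) • Ψ + Γ0)
    (hG' : G' = fun ζ => (((1 - 2 * ζ) * c1 : ℝ) : ℂ) • Γw + ((c2 : ℝ) : ℂ) • Λw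
        - ((c3 : ℝ) : ℂ) • Ψ)
    (hG'' : G'' = ((-2 * c1 : ℝ) : ℂ) • Γw)
    (f : ℝ → ℝ)
    (hf : f = fun ζ => τ * pt * pd * (star r ⬝ᵥ ((G ζ)⁻¹.mulVec r)).re) :
    (∀ ζ ∈ Set.Icc (0 : ℝ) 1,
      deriv (deriv f) ζ = τ * pt * pd *
        (star r ⬝ᵥ (((G ζ)⁻¹ * (2 • (G' ζ * (G ζ)⁻¹ * G' ζ) - G'') * (G ζ)⁻¹).mulVec r)).re ∧
      (Γw.PosDef → r ≠ 0 → 0 < deriv (deriv f) ζ)) ∧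
    (Γw.PosDef → r ≠ 0 → StrictConvexOn ℝ (Set.Icc (0 : ℝ) 1) f) := by
  classical
  -- abbreviations
  set c : ℝ := τ * pt * pd with hc
  have hcpos : 0 < c := by positivity
  -- the continuous linear functional M ↦ (rᴴ M r).re
  let L : Matrix n n ℂ →L[ℝ] ℝ :=
    Complex.reCLM.comp (((auxQF r).toContinuousLinearMap).restrictScalars ℝ)
  have hL : ∀ M : Matrix n n ℂ, L M = (star r ⬝ᵥ (M *ᵥ r)).re := fun M => rfl
  -- real-smul forms
  have hGr : G = fun ζ => (ζ * (1 - ζ) * c1) • Γw + (ζ * c2) • Λw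
      + ((1 - ζ) * c3) • Ψ + Γ0 := by
    rw [hG]; funext ζ; simp only [Complex.coe_smul]
  have hG'r : G' = fun ζ => ((1 - 2 * ζ) * c1) • Γw + c2 • Λw - c3 • Ψ := by
    rw [hG']; funext ζ; simp only [Complex.coe_smul]
  have hG''r : G'' = (-2 * c1) • Γw := by
    rw [hG'']; simp only [Complex.coe_smul]
  -- derivative of G
  have hGd : ∀ ζ : ℝ, HasDerivAt G (G' ζ) ζ := by
    intro ζ
    rw [hGr, hG'r]
    have hs1 : HasDerivAt (fun ζ : ℝ => ζ * (1 - ζ) * c1) ((1 - 2 * ζ) * c1) ζ := by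
      have := ((hasDerivAt_id ζ).mul ((hasDerivAt_const ζ (1 : ℝ)).sub (hasDerivAt_id ζ))).mul_const c1
      refine this.congr_deriv ?_; (try simp only [id_eq, Pi.sub_apply, Pi.mul_apply]); ring
    have hs2 : HasDerivAt (fun ζ : ℝ => ζ * c2) c2 ζ := by
      simpa using (hasDerivAt_id ζ).mul_const c2
    have hs3 : HasDerivAt (fun ζ : ℝ => (1 - ζ) * c3) (-c3) ζ := by
      have := ((hasDerivAt_const ζ (1 : ℝ)).sub (hasDerivAt_id ζ)).mul_const c3
      refine this.congr_deriv ?_; (try simp only [id_eq, Pi.sub_apply, Pi.mul_apply]); ring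
    have := (((hs1.smul_const Γw).add (hs2.smul_const Λw)).add (hs3.smul_const Ψ)).add_const Γ0
    refine this.congr_deriv ?_
    simp [neg_smul, sub_eq_add_neg]
  -- derivative of G'
  have hG'd : ∀ ζ : ℝ, HasDerivAt G' G'' ζ := by
    intro ζ
    rw [hG'r, hG''r]
    have hs4 : HasDerivAt (fun ζ : ℝ => (1 - 2 * ζ) * c1) (-2 * c1) ζ := by
      have := ((hasDerivAt_const ζ (1 : ℝ)).sub ((hasDerivAt_id ζ).const_mul (2:ℝ))).mul_const c1
      refine this.congr_deriv ?_; (try simp only [id_eq, Pi.sub_apply, Pi.mul_apply]); ring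
    exact ((hs4.smul_const Γw).add_const _).sub_const _
  -- the open set where G is invertible
  have hGcont : Continuous G := by
    rw [hGr]; fun_prop
  set U : Set ℝ := {ζ | IsUnit (G ζ)} with hU
  have hUopen : IsOpen U := by
    have : U = (fun ζ => (G ζ).det) ⁻¹' {(0 : ℂ)}ᶜ := by
      ext ζ
      simp [hU, Matrix.isUnit_iff_isUnit_det, isUnit_iff_ne_zero]
    rw [this]
    exact (isOpen_compl_singleton).preimage (Continuous.matrix_det hGcont)
  -- G is positive definite on [0,1]
  have hGpd : ∀ ζ ∈ Set.Icc (0 : ℝ) 1, (G ζ).PosDef := by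
    intro ζ hζ
    obtain ⟨h0, h1⟩ := hζ
    rw [hG]
    refine Matrix.PosDef.posSemidef_add ?_ hΓ0
    refine Matrix.PosSemidef.add (Matrix.PosSemidef.add ?_ ?_) ?_
    · exact aux_smul_posSemidef (mul_nonneg (mul_nonneg h0 (by linarith)) hc1.le) hΓw
    · exact aux_smul_posSemidef (mul_nonneg h0 hc2.le) hΛw
    · exact aux_smul_posSemidef (mul_nonneg (by linarith) hc3.le) hΨ
  have hIccU : Set.Icc (0 : ℝ) 1 ⊆ U := fun ζ hζ => (hGpd ζ hζ).isUnit
  -- first derivative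
  set H : ℝ → Matrix n n ℂ := fun ζ => (G ζ)⁻¹ with hH
  have hHd : ∀ ζ ∈ U, HasDerivAt H (-(H ζ * G' ζ * H ζ)) ζ := fun ζ hζ =>
    aux_hasDerivAt_matrix_inv (hGd ζ) hζ
  set f1 : ℝ → ℝ := fun ζ => c * L (-(H ζ * G' ζ * H ζ)) with hf1
  set f2 : ℝ → ℝ := fun ζ =>
    c * (star r ⬝ᵥ ((H ζ * (2 • (G' ζ * H ζ * G' ζ) - G'') * H ζ) *ᵥ r)).re with hf2
  have hfd : ∀ ζ ∈ U, HasDerivAt f (f1 ζ) ζ := by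
    intro ζ hζ
    have h1 : HasDerivAt (fun t => L (H t)) (L (-(H ζ * G' ζ * H ζ))) ζ :=
      (L.hasFDerivAt.comp_hasDerivAt ζ (hHd ζ hζ))
    have := h1.const_mul c
    rw [hf]
    exact this
  have hf1d : ∀ ζ ∈ U, HasDerivAt f1 (f2 ζ) ζ := by
    intro ζ hζ
    have hP : HasDerivAt (fun t => -(H t * G' t * H t))
        (H ζ * (2 • (G' ζ * H ζ * G' ζ) - G'') * H ζ) ζ := by
      have h1 : HasDerivAt (fun t => H t * G' t)
          ((-(H ζ * G' ζ * H ζ)) * G' ζ + H ζ * G'') ζ :=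
        (hHd ζ hζ).mul (hG'd ζ)
      have h2 : HasDerivAt (fun t => H t * G' t * H t)
          (((-(H ζ * G' ζ * H ζ)) * G' ζ + H ζ * G'') * H ζ
            + (H ζ * G' ζ) * (-(H ζ * G' ζ * H ζ))) ζ :=
        h1.mul (hHd ζ hζ)
      have h3 := h2.neg
      refine h3.congr_deriv ?_
      rw [two_smul]
      noncomm_ring
    have h4 : HasDerivAt (fun t => L (-(H t * G' t * H t)))
        (L (H ζ * (2 • (G' ζ * H ζ * G' ζ) - G'') * H ζ)) ζ :=
      (L.hasFDerivAt.comp_hasDerivAt ζ hP)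
    have := h4.const_mul c
    rw [hf2]
    exact this
  -- second-derivative formula on U
  have hderiv2 : ∀ ζ ∈ U, deriv (deriv f) ζ = f2 ζ := by
    intro ζ hζ
    have hev : deriv f =ᶠ[nhds ζ] f1 :=
      Filter.eventuallyEq_of_mem (hUopen.mem_nhds hζ) (fun t ht => (hfd t ht).deriv)
    rw [hev.deriv_eq]
    exact (hf1d ζ hζ).deriv
  -- positivity of the second derivative
  have hpos : ∀ ζ ∈ Set.Icc (0 : ℝ) 1, Γw.PosDef → r ≠ 0 → 0 < deriv (deriv f) ζ := by
    intro ζ hζ hΓwpd hr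
    rw [hderiv2 ζ (hIccU hζ)]
    have hGp := hGpd ζ hζ
    have hHpd : (H ζ).PosDef := hGp.inv
    have hHherm : (H ζ)ᴴ = H ζ := hHpd.1.eq
    -- the middle matrix is positive definite
    have hsm : ∀ (a : ℝ) (M : Matrix n n ℂ), Mᴴ = M → (a • M)ᴴ = a • M := by
      intro a M hM
      rw [Matrix.conjTranspose_smul, hM, star_trivial]
    have hG'herm : (G' ζ)ᴴ = G' ζ := by
      rw [hG'r]
      simp only [Matrix.conjTranspose_sub, Matrix.conjTranspose_add]
      rw [hsm _ _ hΓw.1.eq, hsm _ _ hΛw.1.eq, hsm _ _ hΨ.1.eq]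
    have hXpsd : (G' ζ * H ζ * G' ζ).PosSemidef := by
      have := hHpd.posSemidef.conjTranspose_mul_mul_same (G' ζ)
      rwa [hG'herm] at this
    have h2X : ((2 : ℕ) • (G' ζ * H ζ * G' ζ)).PosSemidef := by
      rw [two_smul]; exact hXpsd.add hXpsd
    have hG2 : -G'' = ((2 * c1 : ℝ) : ℂ) • Γw := by
      rw [hG'', ← neg_smul]
      congr 1
      push_cast
      ring
    have hmid : (2 • (G' ζ * H ζ * G' ζ) - G'').PosDef := by
      rw [sub_eq_add_neg, hG2]
      exact Matrix.PosDef.posSemidef_add h2X (aux_smul_posDef (by linarith) hΓwpd)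
    have hN : (H ζ * (2 • (G' ζ * H ζ * G' ζ) - G'') * H ζ).PosDef := by
      have := aux_posDef_conj hmid hHpd.isUnit
      rwa [hHherm] at this
    have hre := hN.re_dotProduct_pos hr
    refine mul_pos hcpos ?_
    simpa using hre
  refine ⟨fun ζ hζ => ⟨?_, fun hw hr => hpos ζ hζ hw hr⟩, fun hw hr => ?_⟩
  · rw [hderiv2 ζ (hIccU hζ)]
  · refine strictConvexOn_of_deriv2_pos (convex_Icc 0 1) ?_ ?_
    · intro x hx
      exact ((hfd x (hIccU hx)).continuousAt).continuousWithinAt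
    · intro x hx
      rw [interior_Icc] at hx
      have := hpos x (Set.mem_Icc_of_Ioo hx) hw hr
      show 0 < deriv (deriv f) x
      exact this
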